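/- arXiv:2103.17024 — 4 statements merged into one kernel-verified Lean document; each statement's English description precedes it below -/
import Mathlib

section
/- Intuitionistic principle of isomorphic correction: let M, N be Kripke Θ-models and (g,h) an IL-elementary embedding of M into N. Then there exists a Θ-model M' and functions g' ⊇ g, h' ⊇ h such that M is an IL-elementary submodel of M' and (g',h') is an isomorphism from M' onto N. -/
set_option linter.unusedVariables false

universe u

/-- A first-order signature: predicate symbols with arities, and constant symbols. -/
structure Sig : Type (u + 1) where
  Pred : Type u
  arity : Pred → ℕ
  Const : Type u

/-- A first-order Kripke `S`-model with ambient type `W` of worlds and `D` of objects. -/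
structure KModel (S : Sig.{u}) (W : Type*) (D : Type*) where
  worlds : Set W
  rel : W → W → Prop
  rel_mem : ∀ {a b}, rel a b → a ∈ worlds ∧ b ∈ worlds
  rel_refl : ∀ {a}, a ∈ worlds → rel a a
  rel_trans : ∀ {a b c}, rel a b → rel b c → rel a c
  rel_antisymm : ∀ {a b}, rel a b → rel b a → a = b
  dom : W → Set D
  dom_disjoint : ∀ {a b}, a ∈ worlds → b ∈ worlds → a ≠ b → Disjoint (dom a) (dom b)
  interpP : (w : W) → (P : S.Pred) → Set (Fin (S.arity P) → D)
  interpC : W → S.Const → D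
  interpC_mem : ∀ {a}, a ∈ worlds → ∀ c, interpC a c ∈ dom a
  H : W → W → D → D
  H_mem : ∀ {a b}, rel a b → ∀ {x}, x ∈ dom a → H a b x ∈ dom b
  H_id : ∀ {a}, a ∈ worlds → ∀ {x}, x ∈ dom a → H a a x = x
  H_comp : ∀ {a b c}, rel a b → rel b c → ∀ {x}, x ∈ dom a → H a c x = H b c (H a b x)
  H_pred : ∀ {a b}, rel a b → ∀ {P : S.Pred} {t : Fin (S.arity P) → D}, t ∈ interpP a P →
    (∀ i, t i ∈ dom a) → (fun i => H a b (t i)) ∈ interpP b P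
  H_const : ∀ {a b}, rel a b → ∀ c, H a b (interpC a c) = interpC b c

variable {S T : Sig} {W D : Type*}

/-- The total domain `⋃_{w ∈ W} A_w` of a Kripke model. -/
def totalDom (M : KModel S W D) : Set D := ⋃ w ∈ M.worlds, M.dom w

/-- `M` is a submodel of `N`. -/
def Submodel (M N : KModel S W D) : Prop :=
  M.worlds ⊆ N.worlds ∧
  (∀ a b, M.rel a b ↔ N.rel a b ∧ a ∈ M.worlds ∧ b ∈ M.worlds) ∧
  (∀ w ∈ M.worlds, M.dom w ⊆ N.dom w) ∧
  (∀ w ∈ M.worlds, ∀ (P : S.Pred) (t : Fin (S.arity P) → D),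
      (∀ i, t i ∈ M.dom w) → (t ∈ M.interpP w P ↔ t ∈ N.interpP w P)) ∧
  (∀ w ∈ M.worlds, ∀ c, M.interpC w c = N.interpC w c) ∧
  (∀ a b, M.rel a b → ∀ x ∈ M.dom a, M.H a b x = N.H a b x)

/-- Extensional equality of Kripke models (agreement on all meaningful components). -/
def MEq (M N : KModel S W D) : Prop :=
  M.worlds = N.worlds ∧
  (∀ a b, M.rel a b ↔ N.rel a b) ∧
  (∀ w ∈ M.worlds, M.dom w = N.dom w) ∧
  (∀ w ∈ M.worlds, ∀ (P : S.Pred) (t : Fin (S.arity P) → D),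
      (∀ i, t i ∈ M.dom w) → (t ∈ M.interpP w P ↔ t ∈ N.interpP w P)) ∧
  (∀ w ∈ M.worlds, ∀ c, M.interpC w c = N.interpC w c) ∧
  (∀ a b, M.rel a b → ∀ x ∈ M.dom a, M.H a b x = N.H a b x)

/-- Terms of the language: variables (de Bruijn, among `n` free variables) and constants. -/
inductive Term (S : Sig.{u}) (n : ℕ) : Type u where
  | var : Fin n → Term S n
  | const : S.Const → Term S n

/-- Intuitionistic first-order formulas (without equality) with free variables among `Fin n`. -/
inductive Fml (S : Sig.{u}) : ℕ → Type u where
  | atom {n} (P : S.Pred) (ts : Fin (S.arity P) → Term S n) : Fml S n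
  | bot {n} : Fml S n
  | and {n} : Fml S n → Fml S n → Fml S n
  | or {n} : Fml S n → Fml S n → Fml S n
  | imp {n} : Fml S n → Fml S n → Fml S n
  | all {n} : Fml S (n + 1) → Fml S n
  | ex {n} : Fml S (n + 1) → Fml S n

/-- Evaluation of a term at a world under an assignment. -/
def Term.eval (M : KModel S W D) (w : W) {n : ℕ} (ρ : Fin n → D) : Term S n → D
  | .var i => ρ i
  | .const c => M.interpC w c

/-- Kripke satisfaction for intuitionistic first-order logic. -/
def Sat (M : KModel S W D) : ∀ {n : ℕ}, W → Fml S n → (Fin n → D) → Prop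
  | _, w, .atom P ts, ρ => (fun i => Term.eval M w ρ (ts i)) ∈ M.interpP w P
  | _, _, .bot, _ => False
  | _, w, .and φ ψ, ρ => Sat M w φ ρ ∧ Sat M w ψ ρ
  | _, w, .or φ ψ, ρ => Sat M w φ ρ ∨ Sat M w ψ ρ
  | _, w, .imp φ ψ, ρ => ∀ v, M.rel w v →
      (Sat M v φ (fun i => M.H w v (ρ i)) → Sat M v ψ (fun i => M.H w v (ρ i)))
  | _, w, .all φ, ρ => ∀ v, M.rel w v → ∀ a ∈ M.dom v,
      Sat M v φ (Fin.snoc (fun i => M.H w v (ρ i)) a)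
  | _, w, .ex φ, ρ => ∃ a ∈ M.dom w, Sat M w φ (Fin.snoc ρ a)

/-- The positive complete type of a tuple at a world. -/
def TpPos (M : KModel S W D) (w : W) {n : ℕ} (a : Fin n → D) : Set (Fml S n) :=
  {φ | Sat M w φ a}

/-- The complete type: the pair of the sets of formulas true resp. false of the tuple. -/
def Tp (M : KModel S W D) (w : W) {n : ℕ} (a : Fin n → D) :
    Set (Fml S n) × Set (Fml S n) :=
  ({φ | Sat M w φ a}, {φ | ¬ Sat M w φ a})

/-- `M` is an IL-elementary submodel of `N`. -/
def ElemSub (M N : KModel S W D) : Prop :=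
  Submodel M N ∧
  ∀ w ∈ M.worlds, ∀ (n : ℕ) (a : Fin n → D), (∀ i, a i ∈ M.dom w) → Tp M w a = Tp N w a
/-- The submodel of `M` generated by the upward cone of `w`. -/
def genSub (M : KModel S W D) (w : W) : KModel S W D where
  worlds := {v | M.rel w v}
  rel a b := M.rel w a ∧ M.rel a b
  rel_mem := fun {a b} h => ⟨h.1, M.rel_trans h.1 h.2⟩
  rel_refl := fun {a} ha => ⟨ha, M.rel_refl (M.rel_mem ha).2⟩
  rel_trans := fun {a b c} h h' => ⟨h.1, M.rel_trans h.2 h'.2⟩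
  rel_antisymm := fun {a b} h h' => M.rel_antisymm h.2 h'.2
  dom := M.dom
  dom_disjoint := fun {a b} ha hb hne => M.dom_disjoint (M.rel_mem ha).2 (M.rel_mem hb).2 hne
  interpP := M.interpP
  interpC := M.interpC
  interpC_mem := fun {a} ha c => M.interpC_mem (M.rel_mem ha).2 c
  H := M.H
  H_mem := fun {a b} h {x} hx => M.H_mem h.2 hx
  H_id := fun {a} ha {x} hx => M.H_id (M.rel_mem ha).2 hx
  H_comp := fun {a b c} h h' {x} hx => M.H_comp h.2 h'.2 hx
  H_pred := fun {a b} h {P t} ht hdom => M.H_pred h.2 ht hdom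
  H_const := fun {a b} h c => M.H_const h.2 c

/-- Extension of a signature by `n` fresh pairwise distinct constants. -/
def Sig.addConsts (S : Sig.{u}) (n : ℕ) : Sig.{u} where
  Pred := S.Pred
  arity := S.arity
  Const := S.Const ⊕ Fin n

/-- A morphism of signatures (arity preserving). -/
structure SigHom (S T : Sig) where
  predMap : S.Pred → T.Pred
  constMap : S.Const → T.Const
  arity_eq : ∀ P, T.arity (predMap P) = S.arity P

/-- The inclusion of a signature into its extension by fresh constants. -/
def Sig.incConsts (S : Sig) (n : ℕ) : SigHom S (S.addConsts n) :=
  ⟨id, Sum.inl, fun _ => rfl⟩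

/-- Reduct of a model along a signature morphism. -/
def reductHom (r : SigHom S T) (M : KModel T W D) : KModel S W D where
  worlds := M.worlds
  rel := M.rel
  rel_mem := M.rel_mem
  rel_refl := M.rel_refl
  rel_trans := M.rel_trans
  rel_antisymm := M.rel_antisymm
  dom := M.dom
  dom_disjoint := M.dom_disjoint
  interpP w P := {t | (fun i => t (Fin.cast (r.arity_eq P) i)) ∈ M.interpP w (r.predMap P)}
  interpC w c := M.interpC w (r.constMap c)
  interpC_mem := fun {a} ha c => M.interpC_mem ha _
  H := M.H
  H_mem := M.H_mem
  H_id := M.H_id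
  H_comp := M.H_comp
  H_pred := fun {a b} h {P t} ht hdom => M.H_pred h ht (fun i => hdom _)
  H_const := fun {a b} h c => M.H_const h _

/-- The canonical expansion `([M,w], c̄/ā)` of the generated submodel `[M,w]` by fresh
constants denoting `ā` at `w`. -/
def constExt (M : KModel S W D) (w : W) {n : ℕ} (a : Fin n → D)
    (hw : w ∈ M.worlds) (ha : ∀ i, a i ∈ M.dom w) : KModel (S.addConsts n) W D where
  worlds := {v | M.rel w v}
  rel a b := M.rel w a ∧ M.rel a b
  rel_mem := fun {a b} h => ⟨h.1, M.rel_trans h.1 h.2⟩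
  rel_refl := fun {a} ha => ⟨ha, M.rel_refl (M.rel_mem ha).2⟩
  rel_trans := fun {a b c} h h' => ⟨h.1, M.rel_trans h.2 h'.2⟩
  rel_antisymm := fun {a b} h h' => M.rel_antisymm h.2 h'.2
  dom := M.dom
  dom_disjoint := fun {a b} ha hb hne => M.dom_disjoint (M.rel_mem ha).2 (M.rel_mem hb).2 hne
  interpP := M.interpP
  interpC v c := Sum.elim (M.interpC v) (fun i => M.H w v (a i)) c
  interpC_mem := fun {v} hv c => by
    cases c with
    | inl c => exact M.interpC_mem (M.rel_mem hv).2 c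
    | inr i => exact M.H_mem hv (ha i)
  H := M.H
  H_mem := fun {a b} h {x} hx => M.H_mem h.2 hx
  H_id := fun {a} ha {x} hx => M.H_id (M.rel_mem ha).2 hx
  H_comp := fun {a b c} h h' {x} hx => M.H_comp h.2 h'.2 hx
  H_pred := fun {a b} h {P t} ht hdom => M.H_pred h.2 ht hdom
  H_const := fun {u v} h c => by
    cases c with
    | inl c => exact M.H_const h.2 c
    | inr i => exact (M.H_comp h.1 h.2 (ha i)).symm

/-- Translation of terms along a signature morphism. -/
def mapTerm (r : SigHom S T) {n : ℕ} : Term S n → Term T n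
  | .var i => .var i
  | .const c => .const (r.constMap c)

/-- Translation of formulas along a signature morphism. -/
def mapFml (r : SigHom S T) : ∀ {n : ℕ}, Fml S n → Fml T n
  | _, .atom P ts => .atom (r.predMap P) (fun i => mapTerm r (ts (Fin.cast (r.arity_eq P) i)))
  | _, .bot => .bot
  | _, .and φ ψ => .and (mapFml r φ) (mapFml r ψ)
  | _, .or φ ψ => .or (mapFml r φ) (mapFml r ψ)
  | _, .imp φ ψ => .imp (mapFml r φ) (mapFml r ψ)
  | _, .all φ => .all (mapFml r φ)
  | _, .ex φ => .ex (mapFml r φ)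

/-- The canonical identification of `Θ ∪ {c̄_{n+1}}` with `(Θ ∪ {c̄_n}) ∪ {c_{n+1}}`. -/
def flattenHom (S : Sig) (n : ℕ) : SigHom (S.addConsts (n + 1)) ((S.addConsts n).addConsts 1) where
  predMap := id
  constMap := fun c =>
    match c with
    | .inl c => .inl (.inl c)
    | .inr i => if h : (i : ℕ) < n then .inl (.inr ⟨i, h⟩) else .inr 0
  arity_eq := fun _ => rfl

section Hetero

variable {W₁ D₁ W₂ D₂ : Type*}

/-- `(g,h)` is an isomorphism from `M` onto `N`. -/
def IsIso (M : KModel S W₁ D₁) (N : KModel S W₂ D₂) (g : D₁ → D₂) (h : W₁ → W₂) : Prop :=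
  Set.BijOn h M.worlds N.worlds ∧
  Set.BijOn g (totalDom M) (totalDom N) ∧
  (∀ a b, a ∈ M.worlds → b ∈ M.worlds → (M.rel a b ↔ N.rel (h a) (h b))) ∧
  (∀ w ∈ M.worlds, Set.BijOn g (M.dom w) (N.dom (h w))) ∧
  (∀ w ∈ M.worlds, ∀ (P : S.Pred) (t : Fin (S.arity P) → D₁), (∀ i, t i ∈ M.dom w) →
      (t ∈ M.interpP w P ↔ (fun i => g (t i)) ∈ N.interpP (h w) P)) ∧
  (∀ w ∈ M.worlds, ∀ c, g (M.interpC w c) = N.interpC (h w) c) ∧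
  (∀ a b, M.rel a b → ∀ x ∈ M.dom a, g (M.H a b x) = N.H (h a) (h b) (g x))

/-- `(g,h)` is an IL-elementary embedding of `M` into `N`. -/
def IsElemEmbed (M : KModel S W₁ D₁) (N : KModel S W₂ D₂) (g : D₁ → D₂) (h : W₁ → W₂) : Prop :=
  Set.InjOn h M.worlds ∧
  Set.InjOn g (totalDom M) ∧
  (∀ a b, a ∈ M.worlds → b ∈ M.worlds → (M.rel a b ↔ N.rel (h a) (h b))) ∧
  (∀ w ∈ M.worlds, Set.MapsTo g (M.dom w) (N.dom (h w))) ∧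
  (∀ a b, M.rel a b → ∀ x ∈ M.dom a, g (M.H a b x) = N.H (h a) (h b) (g x)) ∧
  (∀ w ∈ M.worlds, ∀ (n : ℕ) (a : Fin n → D₁), (∀ i, a i ∈ M.dom w) →
      Tp M w a = Tp N (h w) (fun i => g (a i)))

/-- The conditions (atom), (s-back), (obj-forth), (obj-back) of an IL-asimulation, for
the direction from `M₁` to `M₂`, with partner family `G` for the converse direction. -/
def AsimDir (M₁ : KModel S W₁ D₁) (M₂ : KModel S W₂ D₂)
    (F : ∀ k : ℕ, W₁ → (Fin k → D₁) → W₂ → (Fin k → D₂) → Prop)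
    (G : ∀ k : ℕ, W₂ → (Fin k → D₂) → W₁ → (Fin k → D₁) → Prop) : Prop :=
  ∀ (k : ℕ) (w : W₁) (α : Fin k → D₁) (v : W₂) (β : Fin k → D₂),
    F k w α v β → (∀ i, α i ∈ M₁.dom w) → (∀ i, β i ∈ M₂.dom v) →
    ((∀ (P : S.Pred) (ts : Fin (S.arity P) → Term S k),
        Sat M₁ w (.atom P ts) α → Sat M₂ v (.atom P ts) β) ∧
     (∀ t, M₂.rel v t → ∃ u, M₁.rel w u ∧
        F k u (fun i => M₁.H w u (α i)) t (fun i => M₂.H v t (β i)) ∧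
        G k t (fun i => M₂.H v t (β i)) u (fun i => M₁.H w u (α i))) ∧
     (∀ α' ∈ M₁.dom w, ∃ β' ∈ M₂.dom v,
        F (k + 1) w (Fin.snoc α α') v (Fin.snoc β β')) ∧
     (∀ t, M₂.rel v t → ∀ β' ∈ M₂.dom t, ∃ u, M₁.rel w u ∧ ∃ α' ∈ M₁.dom u,
        F (k + 1) u (Fin.snoc (fun i => M₁.H w u (α i)) α')
          t (Fin.snoc (fun i => M₂.H v t (β i)) β')))

/-- `(F, G)` is an IL-asimulation (in both directions) between `M₁` and `M₂`. -/
def IsAsim (M₁ : KModel S W₁ D₁) (M₂ : KModel S W₂ D₂)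
    (F : ∀ k : ℕ, W₁ → (Fin k → D₁) → W₂ → (Fin k → D₂) → Prop)
    (G : ∀ k : ℕ, W₂ → (Fin k → D₂) → W₁ → (Fin k → D₁) → Prop) : Prop :=
  AsimDir M₁ M₂ F G ∧ AsimDir M₂ M₁ G F

/-- `(F, G)` is an IL-asimulation from `(M₁, w₁, ā)` to `(M₂, w₂, b̄)`. -/
def AsimFrom (M₁ : KModel S W₁ D₁) (w₁ : W₁) {n : ℕ} (a : Fin n → D₁)
    (M₂ : KModel S W₂ D₂) (w₂ : W₂) (b : Fin n → D₂)
    (F : ∀ k : ℕ, W₁ → (Fin k → D₁) → W₂ → (Fin k → D₂) → Prop)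
    (G : ∀ k : ℕ, W₂ → (Fin k → D₂) → W₁ → (Fin k → D₁) → Prop) : Prop :=
  IsAsim M₁ M₂ F G ∧ F n w₁ a w₂ b

end Hetero

/-- `E` is a congruence on the Kripke model `M`. -/
def IsCong (M : KModel S W D) (E : W → D → D → Prop) : Prop :=
  (∀ w ∈ M.worlds, ∀ a ∈ M.dom w, E w a a) ∧
  (∀ w ∈ M.worlds, ∀ a b, E w a b → E w b a) ∧
  (∀ w ∈ M.worlds, ∀ a b c, E w a b → E w b c → E w a c) ∧
  (∀ w ∈ M.worlds, ∀ a b, E w a b → a ∈ M.dom w ∧ b ∈ M.dom w) ∧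
  (∀ a b, M.rel a b → ∀ x y, E a x y → E b (M.H a b x) (M.H a b y)) ∧
  (∀ w ∈ M.worlds, ∀ (P : S.Pred) (t t' : Fin (S.arity P) → D),
      (∀ i, E w (t i) (t' i)) → (t ∈ M.interpP w P ↔ t' ∈ M.interpP w P))

/-- `Q` is the quotient of `M` by the congruence `E`: same worlds and order, domains of
equivalence classes, induced interpretations and homomorphisms. -/
def IsQuotient (M : KModel S W D) (E : W → D → D → Prop) (Q : KModel S W (Set D)) : Prop :=
  Q.worlds = M.worlds ∧
  (∀ a b, Q.rel a b ↔ M.rel a b) ∧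
  (∀ w ∈ M.worlds, Q.dom w = {s | ∃ a ∈ M.dom w, s = {b | E w a b}}) ∧
  (∀ w ∈ M.worlds, ∀ (P : S.Pred) (T : Fin (S.arity P) → Set D), (∀ i, T i ∈ Q.dom w) →
      (T ∈ Q.interpP w P ↔ ∃ t ∈ M.interpP w P, ∀ i, T i = {b | E w (t i) b})) ∧
  (∀ w ∈ M.worlds, ∀ c, Q.interpC w c = {b | E w (M.interpC w c) b}) ∧
  (∀ a b, M.rel a b → ∀ x ∈ M.dom a, Q.H a b {y | E a x y} = {y | E b (M.H a b x) y})

section Unravel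

/-- The worlds of the unravelling of `(M, w)`: finite `≺`-increasing sequences starting at `w`. -/
def unChains (M : KModel S W D) (w : W) : Set (List W) :=
  {l | l ≠ [] ∧ l.head? = some w ∧ l.Chain' M.rel}

/-- The one-step extension relation on chains. -/
def unStep (M : KModel S W D) (w : W) (s t : List W) : Prop :=
  s ∈ unChains M w ∧ t ∈ unChains M w ∧ ∃ u, t = s ++ [u]

/-- The accessibility relation of the unravelling: the reflexive-transitive closure of the
one-step extension relation, restricted to chains. -/
def unRel (M : KModel S W D) (w : W) (s t : List W) : Prop :=
  s ∈ unChains M w ∧ t ∈ unChains M w ∧ Relation.ReflTransGen (unStep M w) s t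

/-- `U` is the intuitionistic unravelling of `(M, w)`. -/
def IsUnravelling (M : KModel S W D) (w : W) (U : KModel S (List W) (D × List W)) : Prop :=
  U.worlds = unChains M w ∧
  (∀ s t, U.rel s t ↔ unRel M w s t) ∧
  (∀ l ∈ unChains M w, U.dom l = {p | p.2 = l ∧ p.1 ∈ M.dom (l.getLastD w)}) ∧
  (∀ l ∈ unChains M w, ∀ (P : S.Pred) (t : Fin (S.arity P) → D × List W),
      (t ∈ U.interpP l P ↔ ∃ t₀ ∈ M.interpP (l.getLastD w) P, ∀ i, t i = (t₀ i, l))) ∧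
  (∀ l ∈ unChains M w, ∀ c, U.interpC l c = (M.interpC (l.getLastD w) c, l)) ∧
  (∀ s t, unRel M w s t → ∀ x ∈ M.dom (s.getLastD w),
      U.H s t (x, s) = (M.H (s.getLastD w) (t.getLastD w) x, t))

end Unravel

/-- `(Γ, Δ)` is a successor IL-type of `(M, w, ā)`. -/
def SuccType (M : KModel S W D) (w : W) {n : ℕ} (a : Fin n → D) (Γ Δ : Set (Fml S n)) : Prop :=
  ∀ Γ' Δ' : Set (Fml S n), Γ' ⊆ Γ → Δ' ⊆ Δ → Γ'.Finite → Δ'.Finite →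
    ∃ v, M.rel w v ∧ (∀ φ ∈ Γ', Sat M v φ (fun i => M.H w v (a i))) ∧
      (∀ φ ∈ Δ', ¬ Sat M v φ (fun i => M.H w v (a i)))

/-- `Ξ` is an existential IL-type of `(M, w, ā)`. -/
def ExType (M : KModel S W D) (w : W) {n : ℕ} (a : Fin n → D) (Ξ : Set (Fml S (n + 1))) : Prop :=
  ∀ Ξ' : Set (Fml S (n + 1)), Ξ' ⊆ Ξ → Ξ'.Finite →
    ∃ b ∈ M.dom w, ∀ φ ∈ Ξ', Sat M w φ (Fin.snoc a b)

/-- `Ξ` is a universal IL-type of `(M, w, ā)`. -/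
def UnivType (M : KModel S W D) (w : W) {n : ℕ} (a : Fin n → D) (Ξ : Set (Fml S (n + 1))) : Prop :=
  ∀ Ξ' : Set (Fml S (n + 1)), Ξ' ⊆ Ξ → Ξ'.Finite →
    ∃ v, M.rel w v ∧ ∃ b ∈ M.dom v, ∀ φ ∈ Ξ', ¬ Sat M v φ (Fin.snoc (fun i => M.H w v (a i)) b)

/-- A model is IL-saturated iff it realizes all of its IL-types. -/
def Saturated (M : KModel S W D) : Prop :=
  ∀ w ∈ M.worlds, ∀ (n : ℕ) (a : Fin n → D), (∀ i, a i ∈ M.dom w) →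
    (∀ Γ Δ : Set (Fml S n), SuccType M w a Γ Δ →
       ∃ v, M.rel w v ∧ (∀ φ ∈ Γ, Sat M v φ (fun i => M.H w v (a i))) ∧
         (∀ φ ∈ Δ, ¬ Sat M v φ (fun i => M.H w v (a i)))) ∧
    (∀ Ξ : Set (Fml S (n + 1)), ExType M w a Ξ →
       ∃ b ∈ M.dom w, ∀ φ ∈ Ξ, Sat M w φ (Fin.snoc a b)) ∧
    (∀ Ξ : Set (Fml S (n + 1)), UnivType M w a Ξ →
       ∃ v, M.rel w v ∧ ∃ b ∈ M.dom v, ∀ φ ∈ Ξ, ¬ Sat M v φ (Fin.snoc (fun i => M.H w v (a i)) b))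

/-- `U` is the componentwise union of the countable chain `Ms`. -/
def IsChainUnion (Ms : ℕ → KModel S W D) (U : KModel S W D) : Prop :=
  U.worlds = ⋃ k, (Ms k).worlds ∧
  (∀ a b, U.rel a b ↔ ∃ k, (Ms k).rel a b) ∧
  (∀ w ∈ U.worlds, U.dom w = {x | ∃ k, w ∈ (Ms k).worlds ∧ x ∈ (Ms k).dom w}) ∧
  (∀ w ∈ U.worlds, ∀ (P : S.Pred) (t : Fin (S.arity P) → D), (∀ i, t i ∈ U.dom w) →
      (t ∈ U.interpP w P ↔ ∃ k, w ∈ (Ms k).worlds ∧ (∀ i, t i ∈ (Ms k).dom w) ∧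
        t ∈ (Ms k).interpP w P)) ∧
  (∀ w, ∀ k, w ∈ (Ms k).worlds → ∀ c, U.interpC w c = (Ms k).interpC w c) ∧
  (∀ a b, ∀ k, (Ms k).rel a b → ∀ x ∈ (Ms k).dom a, U.H a b x = (Ms k).H a b x)

/-- `(N, w)` is an `(f,g)`-renaming of `(M, w)` along the signature renaming `r`. -/
def IsRenamedModel (r : SigHom S T) (M : KModel S W D) (N : KModel T W D) : Prop :=
  N.worlds = M.worlds ∧
  (∀ a b, N.rel a b ↔ M.rel a b) ∧
  (∀ w ∈ M.worlds, N.dom w = M.dom w) ∧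
  (∀ w ∈ M.worlds, ∀ (P : S.Pred) (t : Fin (S.arity P) → D),
      ((fun i => t (Fin.cast (r.arity_eq P) i)) ∈ N.interpP w (r.predMap P) ↔ t ∈ M.interpP w P)) ∧
  (∀ w ∈ M.worlds, ∀ c, N.interpC w (r.constMap c) = M.interpC w c) ∧
  (∀ a b, M.rel a b → ∀ x ∈ M.dom a, N.H a b x = M.H a b x)

/-- Membership of `N` in the set `(M,w) ⊕ (c̄/ā)` of possible constant extensions:
`[M,w] ⊆ N↾Θ ⊆ M` and the fresh constants denote `ā` at `w`. -/
def InOplus (M : KModel S W D) (w : W) {n : ℕ} (a : Fin n → D)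
    (N : KModel (S.addConsts n) W D) : Prop :=
  Submodel (genSub M w) (reductHom (S.incConsts n) N) ∧
  Submodel (reductHom (S.incConsts n) N) M ∧
  (∀ i, N.interpC w (Sum.inr i) = a i)

section Correction

variable {W' D' : Type*}

/-- The worlds of the corrected model. -/
def corWorlds (M : KModel S W D) (N : KModel S W' D') (h : W → W') : Set (W ⊕ W') :=
  Sum.inl '' M.worlds ∪ Sum.inr '' (N.worlds \ (h '' M.worlds))

open Classical in
/-- Canonical lifting of an element of `N` to the corrected model over a given world. -/
noncomputable def corLift (M : KModel S W D) (g : D → D') : W ⊕ W' → D' → D ⊕ D'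
  | .inl w, e => if hc : ∃ a ∈ M.dom w, g a = e then .inl hc.choose else .inr e
  | .inr _, e => .inr e

open Classical in
/-- Canonical preimage of a world of `N` in the corrected model. -/
noncomputable def corPre (M : KModel S W D) (h : W → W') : W' → W ⊕ W' :=
  fun v => if hv : ∃ w ∈ M.worlds, h w = v then .inl hv.choose else .inr v

lemma corLift_g (M : KModel S W D) (g : D → D') (x : W ⊕ W') (e : D') :
    Sum.elim g id (corLift (W' := W') M g x e) = e := by
  cases x with
  | inl w =>
    by_cases hc : ∃ a ∈ M.dom w, g a = e
    · simp only [corLift, dif_pos hc]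
      exact hc.choose_spec.2
    · simp only [corLift, dif_neg hc]; rfl
  | inr v => rfl

lemma corLift_inl (M : KModel S W D) (g : D → D') (hg : Set.InjOn g (totalDom M))
    {w : W} (hw : w ∈ M.worlds) {a : D} (ha : a ∈ M.dom w) :
    corLift (W' := W') M g (.inl w) (g a) = .inl a := by
  have hc : ∃ a' ∈ M.dom w, g a' = g a := ⟨a, ha, rfl⟩
  simp only [corLift, dif_pos hc]
  congr 1
  exact hg (Set.mem_biUnion hw hc.choose_spec.1) (Set.mem_biUnion hw ha) hc.choose_spec.2

lemma corPre_mem (M : KModel S W D) (N : KModel S W' D') (h : W → W')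
    {v : W'} (hv : v ∈ N.worlds) : corPre M h v ∈ corWorlds M N h := by
  by_cases hc : ∃ w ∈ M.worlds, h w = v
  · simp only [corPre, dif_pos hc]
    exact Or.inl ⟨hc.choose, hc.choose_spec.1, rfl⟩
  · simp only [corPre, dif_neg hc]
    exact Or.inr ⟨v, ⟨hv, fun ⟨w, hw, hwv⟩ => hc ⟨w, hw, hwv⟩⟩, rfl⟩

lemma corPre_h (M : KModel S W D) (h : W → W') (v : W') :
    Sum.elim h id (corPre M h v) = v := by
  by_cases hc : ∃ w ∈ M.worlds, h w = v
  · simp only [corPre, dif_pos hc]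
    exact hc.choose_spec.2
  · simp only [corPre, dif_neg hc]; rfl

variable {M : KModel S W D} {N : KModel S W' D'} {g : D → D'} {h : W → W'}

lemma corH_world (hgh : IsElemEmbed M N g h) {w : W} (hw : w ∈ M.worlds) :
    h w ∈ N.worlds :=
  (N.rel_mem ((hgh.2.2.1 w w hw hw).mp (M.rel_refl hw))).1

lemma corW_world (hgh : IsElemEmbed M N g h) {x : W ⊕ W'} (hx : x ∈ corWorlds M N h) :
    Sum.elim h id x ∈ N.worlds := by
  rcases hx with ⟨w, hw, rfl⟩ | ⟨v, hv, rfl⟩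
  · exact corH_world hgh hw
  · exact hv.1

lemma corW_inj (hgh : IsElemEmbed M N g h) :
    Set.InjOn (Sum.elim h id) (corWorlds M N h) := by
  rintro x (⟨w, hw, rfl⟩ | ⟨v, hv, rfl⟩) y (⟨w', hw', rfl⟩ | ⟨v', hv', rfl⟩) hxy
  · exact congrArg Sum.inl (hgh.1 hw hw' hxy)
  · exact absurd ⟨w, hw, hxy⟩ hv'.2
  · exact absurd ⟨w', hw', hxy.symm⟩ hv.2
  · exact congrArg Sum.inr hxy

/-- The corrected model: the pullback of `N` along the canonical maps. -/
noncomputable def corModel (M : KModel S W D) (N : KModel S W' D') (g : D → D') (h : W → W')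
    (hgh : IsElemEmbed M N g h) : KModel S (W ⊕ W') (D ⊕ D') where
  worlds := corWorlds M N h
  rel a b := N.rel (Sum.elim h id a) (Sum.elim h id b) ∧
    a ∈ corWorlds M N h ∧ b ∈ corWorlds M N h
  rel_mem := fun h => ⟨h.2.1, h.2.2⟩
  rel_refl := fun {a} ha => ⟨N.rel_refl (corW_world hgh ha), ha, ha⟩
  rel_trans := fun h h' => ⟨N.rel_trans h.1 h'.1, h.2.1, h'.2.2⟩
  rel_antisymm := fun h h' =>
    corW_inj hgh h.2.1 h.2.2 (N.rel_antisymm h.1 h'.1)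
  dom x := corLift M g x '' N.dom (Sum.elim h id x)
  dom_disjoint := by
    rintro x y hx hy hne
    rw [Set.disjoint_left]
    rintro d ⟨e, he, rfl⟩ ⟨f, hf, hef⟩
    have hfe : f = e := by
      have := congrArg (Sum.elim g id) hef
      rwa [corLift_g, corLift_g] at this
    rw [hfe] at hf
    have hd : Sum.elim h id x ≠ Sum.elim h id y := fun hc => hne (corW_inj hgh hx hy hc)
    exact Set.disjoint_left.mp
      (N.dom_disjoint (corW_world hgh hx) (corW_world hgh hy) hd) he hf
  interpP x P := {t | (fun i => Sum.elim g id (t i)) ∈ N.interpP (Sum.elim h id x) P}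
  interpC x c := corLift M g x (N.interpC (Sum.elim h id x) c)
  interpC_mem := fun {x} hx c =>
    ⟨_, N.interpC_mem (corW_world hgh hx) c, rfl⟩
  H x y d := corLift M g y (N.H (Sum.elim h id x) (Sum.elim h id y) (Sum.elim g id d))
  H_mem := by
    rintro x y hr d ⟨e, he, rfl⟩
    rw [corLift_g]
    exact ⟨_, N.H_mem hr.1 he, rfl⟩
  H_id := by
    rintro x hx d ⟨e, he, rfl⟩
    rw [corLift_g, N.H_id (corW_world hgh hx) he]
  H_comp := by
    rintro x y z hxy hyz d ⟨e, he, rfl⟩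
    rw [corLift_g, corLift_g, N.H_comp hxy.1 hyz.1 he]
  H_pred := by
    intro x y hr P t ht hdom
    simp only [Set.mem_setOf_eq, corLift_g] at ht ⊢
    refine N.H_pred hr.1 ht fun i => ?_
    obtain ⟨e, he, hei⟩ := hdom i
    rw [← hei, corLift_g]; exact he
  H_const := by
    intro x y hr c
    rw [corLift_g, N.H_const hr.1 c]

variable {hgh : IsElemEmbed M N g h}

lemma corModel_worlds : (corModel M N g h hgh).worlds = corWorlds M N h := rfl

lemma corModel_rel {x y : W ⊕ W'} :
    (corModel M N g h hgh).rel x y ↔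
      N.rel (Sum.elim h id x) (Sum.elim h id y) ∧
        x ∈ corWorlds M N h ∧ y ∈ corWorlds M N h := Iff.rfl

lemma corModel_dom (x : W ⊕ W') :
    (corModel M N g h hgh).dom x = corLift M g x '' N.dom (Sum.elim h id x) := rfl

lemma corModel_interpP (x : W ⊕ W') (P : S.Pred) (t : Fin (S.arity P) → D ⊕ D') :
    t ∈ (corModel M N g h hgh).interpP x P ↔
      (fun i => Sum.elim g id (t i)) ∈ N.interpP (Sum.elim h id x) P := Iff.rfl

lemma corModel_interpC (x : W ⊕ W') (c : S.Const) :
    (corModel M N g h hgh).interpC x c =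
      corLift M g x (N.interpC (Sum.elim h id x) c) := rfl

lemma corModel_H (x y : W ⊕ W') (d : D ⊕ D') :
    (corModel M N g h hgh).H x y d =
      corLift M g y (N.H (Sum.elim h id x) (Sum.elim h id y) (Sum.elim g id d)) := rfl

lemma corH_g (x y : W ⊕ W') (d : D ⊕ D') :
    Sum.elim g id ((corModel M N g h hgh).H x y d) =
      N.H (Sum.elim h id x) (Sum.elim h id y) (Sum.elim g id d) := by
  rw [corModel_H, corLift_g]

lemma corDom_g {x : W ⊕ W'} {d : D ⊕ D'}
    (hd : d ∈ (corModel M N g h hgh).dom x) :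
    Sum.elim g id d ∈ N.dom (Sum.elim h id x) ∧ corLift M g x (Sum.elim g id d) = d := by
  rw [corModel_dom] at hd
  obtain ⟨e, he, rfl⟩ := hd
  rw [corLift_g]; exact ⟨he, rfl⟩

lemma corEval {n : ℕ} (x : W ⊕ W') (ρ : Fin n → D ⊕ D') (t : Term S n) :
    Sum.elim g id (Term.eval (corModel M N g h hgh) x ρ t) =
      Term.eval N (Sum.elim h id x) (fun i => Sum.elim g id (ρ i)) t := by
  cases t with
  | var i => rfl
  | const c =>
    show Sum.elim g id ((corModel M N g h hgh).interpC x c) = N.interpC (Sum.elim h id x) c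
    rw [corModel_interpC, corLift_g]

lemma corSnoc {n : ℕ} (ρ : Fin n → D ⊕ D') (d : D ⊕ D') :
    (fun i : Fin (n + 1) => Sum.elim g id ((Fin.snoc ρ d : Fin (n + 1) → D ⊕ D') i)) =
      Fin.snoc (fun i => Sum.elim g id (ρ i)) (Sum.elim g id d) := by
  rw [show (fun i : Fin (n + 1) => Sum.elim g id ((Fin.snoc ρ d : Fin (n + 1) → D ⊕ D') i)) =
    Sum.elim g id ∘ (Fin.snoc ρ d : Fin (n + 1) → D ⊕ D') from rfl, Fin.comp_snoc]
  rfl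

lemma corSat {n : ℕ} (φ : Fml S n) :
    ∀ x ∈ corWorlds M N h, ∀ ρ : Fin n → D ⊕ D',
      (Sat (corModel M N g h hgh) x φ ρ ↔
        Sat N (Sum.elim h id x) φ (fun i => Sum.elim g id (ρ i))) := by
  induction φ with
  | atom P ts =>
    intro x hx ρ
    have hdef : Sat (corModel M N g h hgh) x (.atom P ts) ρ ↔
        (fun i => Sum.elim g id (Term.eval (corModel M N g h hgh) x ρ (ts i))) ∈
          N.interpP (Sum.elim h id x) P :=
      corModel_interpP x P _
    rw [hdef]
    have hev : (fun i => Sum.elim g id (Term.eval (corModel M N g h hgh) x ρ (ts i))) =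
        (fun i => Term.eval N (Sum.elim h id x) (fun j => Sum.elim g id (ρ j)) (ts i)) :=
      funext fun i => corEval x ρ (ts i)
    rw [hev]
    exact Iff.rfl
  | bot => intro x hx ρ; exact Iff.rfl
  | and φ ψ ihφ ihψ =>
    intro x hx ρ
    exact and_congr (ihφ x hx ρ) (ihψ x hx ρ)
  | or φ ψ ihφ ihψ =>
    intro x hx ρ
    exact or_congr (ihφ x hx ρ) (ihψ x hx ρ)
  | imp φ ψ ihφ ihψ =>
    intro x hx ρ
    constructor
    · intro hs v hv
      have hyv : Sum.elim h id (corPre M h v) = v := corPre_h M h v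
      have hyw : corPre M h v ∈ corWorlds M N h := corPre_mem M N h (N.rel_mem hv).2
      have hrel : (corModel M N g h hgh).rel x (corPre M h v) :=
        corModel_rel.mpr ⟨by rw [hyv]; exact hv, hx, hyw⟩
      have hH : (fun i => Sum.elim g id ((corModel M N g h hgh).H x (corPre M h v) (ρ i))) =
          fun i => N.H (Sum.elim h id x) v (Sum.elim g id (ρ i)) := by
        funext i; rw [corH_g, hyv]
      intro hφ
      have h1 := hs (corPre M h v) hrel
        ((ihφ _ hyw _).mpr (by rw [hH, hyv]; exact hφ))
      have h2 := (ihψ _ hyw _).mp h1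
      rw [hH, hyv] at h2
      exact h2
    · intro hs y hrel hφ
      obtain ⟨hr, _, hyw⟩ := corModel_rel.mp hrel
      have hH : (fun i => Sum.elim g id ((corModel M N g h hgh).H x y (ρ i))) =
          fun i => N.H (Sum.elim h id x) (Sum.elim h id y) (Sum.elim g id (ρ i)) := by
        funext i; rw [corH_g]
      refine (ihψ y hyw _).mpr ?_
      rw [hH]
      exact hs (Sum.elim h id y) hr (by rw [← hH]; exact (ihφ y hyw _).mp hφ)
  | all φ ih =>
    intro x hx ρ
    constructor
    · intro hs v hv e he
      have hyv : Sum.elim h id (corPre M h v) = v := corPre_h M h v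
      have hyw : corPre M h v ∈ corWorlds M N h := corPre_mem M N h (N.rel_mem hv).2
      have hrel : (corModel M N g h hgh).rel x (corPre M h v) :=
        corModel_rel.mpr ⟨by rw [hyv]; exact hv, hx, hyw⟩
      have hd : corLift M g (corPre M h v) e ∈ (corModel M N g h hgh).dom (corPre M h v) := by
        rw [corModel_dom]; exact ⟨e, by rw [hyv]; exact he, rfl⟩
      have key := (ih _ hyw _).mp (hs _ hrel _ hd)
      rw [corSnoc] at key
      have hH : (fun i => Sum.elim g id ((corModel M N g h hgh).H x (corPre M h v) (ρ i))) =
          fun i => N.H (Sum.elim h id x) v (Sum.elim g id (ρ i)) := by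
        funext i; rw [corH_g, hyv]
      rw [hH, corLift_g, hyv] at key
      exact key
    · intro hs y hrel d hd
      obtain ⟨hr, _, hyw⟩ := corModel_rel.mp hrel
      obtain ⟨hde, hdl⟩ := corDom_g (hgh := hgh) hd
      have key := hs (Sum.elim h id y) hr (Sum.elim g id d) hde
      refine (ih y hyw _).mpr ?_
      rw [corSnoc]
      have hH : (fun i => Sum.elim g id ((corModel M N g h hgh).H x y (ρ i))) =
          fun i => N.H (Sum.elim h id x) (Sum.elim h id y) (Sum.elim g id (ρ i)) := by
        funext i; rw [corH_g]
      rw [hH]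
      exact key
  | ex φ ih =>
    intro x hx ρ
    constructor
    · rintro ⟨d, hd, hs⟩
      obtain ⟨hde, hdl⟩ := corDom_g (hgh := hgh) hd
      refine ⟨Sum.elim g id d, hde, ?_⟩
      have key := (ih x hx _).mp hs
      rwa [corSnoc] at key
    · rintro ⟨e, he, hs⟩
      refine ⟨corLift M g x e, by rw [corModel_dom]; exact ⟨e, he, rfl⟩, ?_⟩
      refine (ih x hx _).mpr ?_
      rw [corSnoc, corLift_g]
      exact hs

lemma corG_injOn (hgh : IsElemEmbed M N g h) :
    Set.InjOn (Sum.elim g id) (totalDom (corModel M N g h hgh)) := by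
  intro d hd d' hd' he
  obtain ⟨x, hx, hdx⟩ := Set.mem_iUnion₂.mp hd
  obtain ⟨x', hx', hdx'⟩ := Set.mem_iUnion₂.mp hd'
  obtain ⟨hde, hdl⟩ := corDom_g (hgh := hgh) hdx
  obtain ⟨hde', hdl'⟩ := corDom_g (hgh := hgh) hdx'
  have hxx' : x = x' := by
    refine corW_inj hgh hx hx' ?_
    by_contra hne
    exact Set.disjoint_left.mp
      (N.dom_disjoint (corW_world hgh hx) (corW_world hgh hx') hne) hde (he ▸ hde')
  rw [← hdl, ← hdl', he, hxx']

end Correction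

/-- The intuitionistic principle of isomorphic correction: an IL-elementary embedding of `M`
into `N` factors as an IL-elementary extension `M'` of (a canonical copy of) `M` together
with an isomorphism of `M'` onto `N` extending the embedding. -/
theorem isomorphic_correction {S : Sig} {W D W' D' : Type*}
    (M : KModel S W D) (N : KModel S W' D') (g : D → D') (h : W → W')
    (hgh : IsElemEmbed M N g h) :
    ∃ (M' : KModel S (W ⊕ W') (D ⊕ D')) (g' : D ⊕ D' → D') (h' : W ⊕ W' → W'),
      (∀ x ∈ totalDom M, g' (Sum.inl x) = g x) ∧
      (∀ w ∈ M.worlds, h' (Sum.inl w) = h w) ∧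
      IsElemEmbed M M' Sum.inl Sum.inl ∧
      IsIso M' N g' h' := by
  classical
  refine ⟨corModel M N g h hgh, Sum.elim g id, Sum.elim h id,
    fun x _ => rfl, fun w _ => rfl, ?_, ?_⟩
  · refine ⟨Sum.inl_injective.injOn, Sum.inl_injective.injOn, ?_, ?_, ?_, ?_⟩
    · intro a b ha hb
      rw [corModel_rel]
      constructor
      · intro hab
        exact ⟨(hgh.2.2.1 a b ha hb).mp hab, Or.inl ⟨a, ha, rfl⟩, Or.inl ⟨b, hb, rfl⟩⟩
      · rintro ⟨hr, _, _⟩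
        exact (hgh.2.2.1 a b ha hb).mpr hr
    · intro w hw d hd
      rw [corModel_dom]
      refine ⟨g d, ?_, corLift_inl M g hgh.2.1 hw hd⟩
      simp only [Sum.elim_inl]
      exact hgh.2.2.2.1 w hw hd
    · intro a b hab x hx
      rw [corModel_H]
      simp only [Sum.elim_inl]
      rw [← hgh.2.2.2.2.1 a b hab x hx,
        corLift_inl M g hgh.2.1 (M.rel_mem hab).2 (M.H_mem hab hx)]
    · intro w hw n a ha
      have h1 := hgh.2.2.2.2.2 w hw n a ha
      have hx : (Sum.inl w : W ⊕ W') ∈ corWorlds M N h := Or.inl ⟨w, hw, rfl⟩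
      have h2 : ∀ φ : Fml S n,
          Sat (corModel M N g h hgh) (Sum.inl w) φ (fun i => Sum.inl (a i)) ↔
            Sat N (h w) φ (fun i => g (a i)) := by
        intro φ
        have := corSat (hgh := hgh) φ (Sum.inl w) hx (fun i => Sum.inl (a i))
        simp only [Sum.elim_inl] at this
        exact this
      have e1 : ∀ φ : Fml S n, Sat M w φ a ↔ Sat N (h w) φ fun i => g (a i) := by
        intro φ
        have := Set.ext_iff.mp (congrArg Prod.fst h1) φ
        simpa [Tp] using this
      have e2 : ∀ φ : Fml S n, Sat M w φ a ↔
          Sat (corModel M N g h hgh) (Sum.inl w) φ (fun i => Sum.inl (a i)) :=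
        fun φ => (e1 φ).trans (h2 φ).symm
      unfold Tp
      exact Prod.ext (Set.ext fun φ => e2 φ) (Set.ext fun φ => not_congr (e2 φ))
  · refine ⟨⟨fun x hx => corW_world hgh hx, corW_inj hgh,
      fun v hv => ⟨corPre M h v, corPre_mem M N h hv, corPre_h M h v⟩⟩,
      ⟨?_, corG_injOn hgh, ?_⟩, ?_, ?_, ?_, ?_, ?_⟩
    · intro d hd
      obtain ⟨x, hx, hdx⟩ := Set.mem_iUnion₂.mp hd
      exact Set.mem_biUnion (corW_world hgh hx) (corDom_g (hgh := hgh) hdx).1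
    · intro e he
      obtain ⟨v, hv, hev⟩ := Set.mem_iUnion₂.mp he
      refine ⟨corLift M g (corPre M h v) e, ?_, corLift_g M g _ e⟩
      refine Set.mem_biUnion (corPre_mem M N h hv) ?_
      rw [corModel_dom]
      exact ⟨e, by rw [corPre_h]; exact hev, rfl⟩
    · intro a b ha hb
      rw [corModel_rel]
      exact ⟨fun hr => hr.1, fun hr => ⟨hr, ha, hb⟩⟩
    · intro x hx
      refine ⟨fun d hd => (corDom_g (hgh := hgh) hd).1, ?_, ?_⟩
      · intro d hd d' hd' he
        obtain ⟨_, hdl⟩ := corDom_g (hgh := hgh) hd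
        obtain ⟨_, hdl'⟩ := corDom_g (hgh := hgh) hd'
        rw [← hdl, ← hdl', he]
      · intro e he
        exact ⟨corLift M g x e, by rw [corModel_dom]; exact ⟨e, he, rfl⟩,
          corLift_g M g x e⟩
    · intro x hx P t ht
      exact corModel_interpP x P t
    · intro x hx c
      rw [corModel_interpC, corLift_g]
    · intro x y hr d hd
      exact corH_g x y d
end

section
/- Preservation of intuitionistic formulas between a model and its unravelling: for a pointed Kripke Θ-model (M, w), every sequence w̄_n ∈ W^{un(w)}, every m ≥ 0 and ā_m ∈ A^m_{w_n}, and every intuitionistic formula φ with free variables among x_1,...,x_m: M, w_n ⊨ φ[ā_m] if and only if M^{un(w)}, w̄_n ⊨ φ[ā_m ⊙ w̄_n], where ā_m ⊙ w̄_n denotes the tuple ((a_1; w̄_n),...,(a_m; w̄_n)). (Equivalently, the complete IL-types coincide.) -/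
set_option linter.unusedVariables false

universe u

variable {S T : Sig} {W D : Type*}

section UnravelAuxProof

variable {S : Sig} {W D : Type*}

lemma getLastD_cons' (a b : W) (t : List W) : (b :: t).getLastD a = t.getLastD b := by
  cases t with
  | nil => simp [List.getLastD_eq_getLast?]
  | cons c r =>
    rw [List.getLastD_eq_getLast?, List.getLastD_eq_getLast?, List.getLast?_cons_cons]
    obtain ⟨x, hx⟩ := Option.isSome_iff_exists.mp
      (List.getLast?_isSome.mpr (List.cons_ne_nil c r))
    rw [hx]; rfl

lemma chain_last_mem' (M : KModel S W D) :
    ∀ (l : List W) (a : W), a ∈ M.worlds → List.Chain M.rel a l → l.getLastD a ∈ M.worlds := by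
  intro l
  induction l with
  | nil => intro a ha _; simpa using ha
  | cons b t ih =>
    intro a ha h
    replace h : M.rel a b ∧ List.Chain M.rel b t := List.isChain_cons_cons.mp h
    rw [getLastD_cons']
    exact ih b (M.rel_mem h.1).2 h.2

lemma mem_last (M : KModel S W D) (w : W) (hw : w ∈ M.worlds) {l : List W}
    (hl : l ∈ unChains M w) : l.getLastD w ∈ M.worlds := by
  obtain ⟨hne, hhd, hch⟩ := hl
  cases l with
  | nil => exact absurd rfl hne
  | cons a t =>
    have haw : a = w := by simpa using hhd
    subst haw
    rw [getLastD_cons']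
    exact chain_last_mem' M t a hw hch

lemma getLast?_eq (d : W) {l : List W} (h : l ≠ []) : l.getLast? = some (l.getLastD d) := by
  cases l with
  | nil => exact absurd rfl h
  | cons a t => rw [List.getLastD_eq_getLast?]; simp [List.getLast?_cons]

lemma step_rel (M : KModel S W D) (w : W) {s t : List W} (h : unStep M w s t) :
    M.rel (s.getLastD w) (t.getLastD w) := by
  obtain ⟨hs, ht, u, rfl⟩ := h
  have hc := ht.2.2
  rw [show List.Chain' M.rel (s ++ [u]) ↔ _ from List.isChain_append] at hc
  have h1 : (s ++ [u]).getLastD w = u := by simp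
  rw [h1]
  exact hc.2.2 _ (by rw [getLast?_eq w hs.1]; rfl) u rfl

lemma rel_last (M : KModel S W D) (w : W) (hw : w ∈ M.worlds) {s t : List W}
    (h : unRel M w s t) : M.rel (s.getLastD w) (t.getLastD w) := by
  obtain ⟨hs, ht, hr⟩ := h
  clear ht
  induction hr with
  | refl => exact M.rel_refl (mem_last M w hw hs)
  | tail h1 h2 ih => exact M.rel_trans ih (step_rel M w h2)

lemma extend_mem (M : KModel S W D) (w : W) {l : List W} (hl : l ∈ unChains M w)
    {v : W} (hv : M.rel (l.getLastD w) v) : (l ++ [v]) ∈ unChains M w := by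
  obtain ⟨hne, hhd, hch⟩ := hl
  refine ⟨by simp, ?_, ?_⟩
  · rw [List.head?_append]
    cases l with
    | nil => exact absurd rfl hne
    | cons a t => simpa using hhd
  · rw [show List.Chain' M.rel (l ++ [v]) ↔ _ from List.isChain_append]
    refine ⟨hch, by simp, ?_⟩
    intro x hx y hy
    rw [getLast?_eq w hne] at hx
    obtain rfl : x = l.getLastD w := by simpa using hx.symm
    obtain rfl : y = v := by simpa using hy.symm
    exact hv

lemma extend_rel (M : KModel S W D) (w : W) {l : List W} (hl : l ∈ unChains M w)
    {v : W} (hv : M.rel (l.getLastD w) v) : unRel M w l (l ++ [v]) :=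
  ⟨hl, extend_mem M w hl hv, Relation.ReflTransGen.single ⟨hl, extend_mem M w hl hv, v, rfl⟩⟩

lemma snoc_mem' {n : ℕ} {s : Set D} {a : Fin n → D} {b : D} (ha : ∀ i, a i ∈ s) (hb : b ∈ s) :
    ∀ i, (Fin.snoc a b : Fin (n + 1) → D) i ∈ s := by
  intro i
  refine Fin.lastCases ?_ (fun j => ?_) i <;> simp [ha, hb]

lemma snoc_pair' {n : ℕ} (a : Fin n → D) (b : D) (l : List W) :
    (Fin.snoc (fun i => (a i, l)) (b, l) : Fin (n + 1) → D × List W)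
      = fun i => ((Fin.snoc a b : Fin (n + 1) → D) i, l) := by
  funext i
  refine Fin.lastCases ?_ (fun j => ?_) i <;> simp

theorem unravel_key (M : KModel S W D) (w : W) (hw : w ∈ M.worlds)
    (U : KModel S (List W) (D × List W)) (hU : IsUnravelling M w U) :
    ∀ {n : ℕ} (φ : Fml S n) (l : List W), l ∈ unChains M w →
      ∀ (a : Fin n → D), (∀ i, a i ∈ M.dom (l.getLastD w)) →
      (Sat M (l.getLastD w) φ a ↔ Sat U l φ (fun i => (a i, l))) := by
  obtain ⟨hW, hR, hD, hP, hC, hH⟩ := hU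
  intro n φ
  induction φ with
  | @atom n P ts =>
    intro l hl a ha
    have hev : ∀ i, Term.eval U l (fun i => (a i, l)) (ts i)
        = (Term.eval M (l.getLastD w) a (ts i), l) := by
      intro i
      cases h : ts i with
      | var j => simp [Term.eval]
      | const c => simp [Term.eval, hC l hl c]
    show _ ∈ M.interpP _ P ↔ _ ∈ U.interpP l P
    rw [hP l hl P _]
    constructor
    · intro h
      exact ⟨_, h, hev⟩
    · rintro ⟨t₀, ht₀, he⟩
      have heq : (fun i => Term.eval M (l.getLastD w) a (ts i)) = t₀ := by
        funext i
        exact congrArg Prod.fst ((hev i).symm.trans (he i))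
      rw [heq]; exact ht₀
  | bot =>
    intro l hl a ha
    simp [Sat]
  | and φ ψ ihφ ihψ =>
    intro l hl a ha
    exact and_congr (ihφ l hl a ha) (ihψ l hl a ha)
  | or φ ψ ihφ ihψ =>
    intro l hl a ha
    exact or_congr (ihφ l hl a ha) (ihψ l hl a ha)
  | imp φ ψ ihφ ihψ =>
    intro l hl a ha
    simp only [Sat]
    constructor
    · intro h t hrel
      have hur : unRel M w l t := (hR l t).mp hrel
      have htc : t ∈ unChains M w := hur.2.1
      have hrl : M.rel (l.getLastD w) (t.getLastD w) := rel_last M w hw hur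
      have hmem : ∀ i, M.H (l.getLastD w) (t.getLastD w) (a i) ∈ M.dom (t.getLastD w) :=
        fun i => M.H_mem hrl (ha i)
      have hass : (fun i => U.H l t ((fun i => (a i, l)) i))
          = fun i => (M.H (l.getLastD w) (t.getLastD w) (a i), t) := by
        funext i; exact hH l t hur (a i) (ha i)
      rw [hass]
      intro hsat
      exact (ihψ t htc _ hmem).mp (h _ hrl ((ihφ t htc _ hmem).mpr hsat))
    · intro h v hrl hsat
      set t := l ++ [v] with ht
      have htc := extend_mem M w hl hrl
      have hur := extend_rel M w hl hrl
      have hrel' : U.rel l t := (hR l t).mpr hur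
      have hlast : t.getLastD w = v := by simp [ht]
      rw [← hlast] at hrl hsat ⊢
      have hmem : ∀ i, M.H (l.getLastD w) (t.getLastD w) (a i) ∈ M.dom (t.getLastD w) :=
        fun i => M.H_mem hrl (ha i)
      have hass : (fun i => U.H l t ((fun i => (a i, l)) i))
          = fun i => (M.H (l.getLastD w) (t.getLastD w) (a i), t) := by
        funext i; exact hH l t hur (a i) (ha i)
      have h2 := h t hrel'
      rw [hass] at h2
      exact (ihψ t htc _ hmem).mpr (h2 ((ihφ t htc _ hmem).mp hsat))
  | @all n φ ih =>
    intro l hl a ha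
    simp only [Sat]
    constructor
    · intro h t hrel p hp
      have hur : unRel M w l t := (hR l t).mp hrel
      have htc : t ∈ unChains M w := hur.2.1
      have hrl : M.rel (l.getLastD w) (t.getLastD w) := rel_last M w hw hur
      rw [hD t htc] at hp
      obtain ⟨hp2, hp1⟩ := hp
      have hass : (Fin.snoc (fun i => U.H l t ((fun i => (a i, l)) i)) p
            : Fin (n + 1) → D × List W)
          = fun i => ((Fin.snoc (fun i => M.H (l.getLastD w) (t.getLastD w) (a i)) p.1
              : Fin (n + 1) → D) i, t) := by
        funext i
        refine Fin.lastCases ?_ (fun j => ?_) i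
        · simp [← hp2]
        · simp only [Fin.snoc_castSucc]
          exact hH l t hur (a j) (ha j)
      rw [hass]
      have hmem := snoc_mem' (fun i => M.H_mem hrl (ha i)) hp1
      exact (ih t htc _ hmem).mp (h _ hrl p.1 hp1)
    · intro h v hrl b hb
      set t := l ++ [v] with ht
      have htc := extend_mem M w hl hrl
      have hur := extend_rel M w hl hrl
      have hrel' : U.rel l t := (hR l t).mpr hur
      have hlast : t.getLastD w = v := by simp [ht]
      rw [← hlast] at hrl hb ⊢
      have hp : (b, t) ∈ U.dom t := by rw [hD t htc]; exact ⟨rfl, hb⟩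
      have h2 := h t hrel' (b, t) hp
      have hass : (Fin.snoc (fun i => U.H l t ((fun i => (a i, l)) i)) (b, t)
            : Fin (n + 1) → D × List W)
          = fun i => ((Fin.snoc (fun i => M.H (l.getLastD w) (t.getLastD w) (a i)) b
              : Fin (n + 1) → D) i, t) := by
        funext i
        refine Fin.lastCases ?_ (fun j => ?_) i
        · simp
        · simp only [Fin.snoc_castSucc]
          exact hH l t hur (a j) (ha j)
      rw [hass] at h2
      have hmem := snoc_mem' (fun i => M.H_mem hrl (ha i)) hb
      exact (ih t htc _ hmem).mpr h2
  | @ex n φ ih =>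
    intro l hl a ha
    simp only [Sat]
    constructor
    · rintro ⟨b, hb, hsat⟩
      refine ⟨(b, l), ?_, ?_⟩
      · rw [hD l hl]; exact ⟨rfl, hb⟩
      · rw [snoc_pair']
        exact (ih l hl _ (snoc_mem' ha hb)).mp hsat
    · rintro ⟨p, hp, hsat⟩
      rw [hD l hl] at hp
      obtain ⟨hp2, hp1⟩ := hp
      refine ⟨p.1, hp1, ?_⟩
      have hpe : p = (p.1, l) := by rw [← hp2]
      rw [hpe, snoc_pair'] at hsat
      exact (ih l hl _ (snoc_mem' ha hp1)).mpr hsat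

end UnravelAuxProof

/-- Preservation of intuitionistic formulas between a model and its unravelling:
the complete types coincide. -/
theorem unravelling_preserves {S : Sig} {W D : Type*} (M : KModel S W D) (w : W)
    (hw : w ∈ M.worlds) (U : KModel S (List W) (D × List W)) (hU : IsUnravelling M w U)
    (l : List W) (hl : l ∈ unChains M w) {n : ℕ} (a : Fin n → D)
    (ha : ∀ i, a i ∈ M.dom (l.getLastD w)) (φ : Fml S n) :
    Sat M (l.getLastD w) φ a ↔ Sat U l φ (fun i => (a i, l)) :=
  unravel_key M w hw U hU φ l hl a ha
end

section
/- The canonical relation between a model and its quotient by a congruence is an asimulation in both directions: with M a Kripke Θ-model and ≈ a congruence on M, the relation B = {((w; ā_m), (w; [ā_m]_{≈(w)})) and its converse pairs : w ∈ W, ā_m ∈ A_w^m} is an IL-asimulation both from (M, v, ā_n) to (M_≈, v, [ā_n]_{≈(v)}) and from (M_≈, v, [ā_n]_{≈(v)}) to (M, v, ā_n), for every world v and tuple ā_n ∈ A_v^n. Consequently, the complete IL-types coincide: Tp(M, v, ā_n) = Tp(M_≈, v, [ā_n]_{≈(v)}). -/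
set_option linter.unusedVariables false

universe u

variable {S T : Sig} {W D : Type*}

section QuotAux

variable {S : Sig} {W D : Type*}

lemma snoc_class {E : W → D → D → Prop} {w : W} {k : ℕ} (α : Fin k → D) (α' : D) :
    (Fin.snoc (fun i => {y | E w (α i) y}) {y | E w α' y} : Fin (k+1) → Set D)
      = fun i => {y | E w ((Fin.snoc α α' : Fin (k+1) → D) i) y} := by
  funext i
  refine Fin.lastCases ?_ ?_ i
  · simp
  · intro j; simp

lemma snoc_mem {A : Set D} {k : ℕ} {α : Fin k → D} {α' : D}
    (hα : ∀ i, α i ∈ A) (h' : α' ∈ A) : ∀ i, (Fin.snoc α α' : Fin (k+1) → D) i ∈ A := by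
  intro i
  refine Fin.lastCases ?_ ?_ i
  · simpa using h'
  · intro j; simpa using hα j

lemma sat_quot (M : KModel S W D) (E : W → D → D → Prop) (hE : IsCong M E)
    (Q : KModel S W (Set D)) (hQ : IsQuotient M E Q) {n : ℕ} (φ : Fml S n) :
    ∀ (w : W), w ∈ M.worlds → ∀ (α : Fin n → D), (∀ i, α i ∈ M.dom w) →
      (Sat M w φ α ↔ Sat Q w φ (fun i => {y | E w (α i) y})) := by
  obtain ⟨hrefl, hsymm, htrans, hEmem, hEH, hEpred⟩ := hE
  obtain ⟨hQw, hQrel, hQdom, hQP, hQC, hQH⟩ := hQ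
  induction φ with
  | @atom m P ts =>
    intro w hw α hα
    set f : Fin (S.arity P) → D := fun i => Term.eval M w α (ts i) with hf
    have hfmem : ∀ i, f i ∈ M.dom w := by
      intro i
      cases h : ts i with
      | var j => simp [hf, Term.eval, h]; exact hα j
      | const c => simp [hf, Term.eval, h]; exact M.interpC_mem hw c
    have heval : (fun i => Term.eval Q w (fun i => {y | E w (α i) y}) (ts i))
        = fun i => {y | E w (f i) y} := by
      funext i
      cases h : ts i with
      | var j => simp [Term.eval, hf, h]
      | const c => simp [Term.eval, hf, h]; exact hQC w hw c
    have hdomQ : ∀ i, {y | E w (f i) y} ∈ Q.dom w := by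
      intro i
      rw [hQdom w hw]
      exact ⟨f i, hfmem i, rfl⟩
    show (fun i => Term.eval M w α (ts i)) ∈ M.interpP w P ↔
      (fun i => Term.eval Q w (fun i => {y | E w (α i) y}) (ts i)) ∈ Q.interpP w P
    rw [heval, hQP w hw P _ hdomQ]
    constructor
    · intro h; exact ⟨f, h, fun i => rfl⟩
    · rintro ⟨t, ht, hcl⟩
      have hEft : ∀ i, E w (t i) (f i) := by
        intro i
        have : f i ∈ {y | E w (f i) y} := hrefl w hw (f i) (hfmem i)
        rw [hcl i] at this
        exact this
      exact (hEpred w hw P t f hEft).mp ht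
  | bot => intro w hw α hα; simp [Sat]
  | and φ ψ ih1 ih2 =>
    intro w hw α hα
    exact and_congr (ih1 w hw α hα) (ih2 w hw α hα)
  | or φ ψ ih1 ih2 =>
    intro w hw α hα
    exact or_congr (ih1 w hw α hα) (ih2 w hw α hα)
  | imp φ ψ ih1 ih2 =>
    intro w hw α hα
    show (∀ v, M.rel w v → _) ↔ (∀ v, Q.rel w v → _)
    apply forall_congr'
    intro v
    constructor
    · intro h hrel
      have hrel' : M.rel w v := (hQrel w v).mp hrel
      have hv : v ∈ M.worlds := (M.rel_mem hrel').2
      have hHmem : ∀ i, M.H w v (α i) ∈ M.dom v := fun i => M.H_mem hrel' (hα i)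
      have hQHeq : (fun i => Q.H w v {y | E w (α i) y})
          = fun i => {y | E v (M.H w v (α i)) y} := by
        funext i; exact hQH w v hrel' (α i) (hα i)
      rw [hQHeq]
      rw [← ih1 v hv _ hHmem, ← ih2 v hv _ hHmem]
      exact h hrel'
    · intro h hrel
      have hrelQ : Q.rel w v := (hQrel w v).mpr hrel
      have hv : v ∈ M.worlds := (M.rel_mem hrel).2
      have hHmem : ∀ i, M.H w v (α i) ∈ M.dom v := fun i => M.H_mem hrel (hα i)
      have hQHeq : (fun i => Q.H w v {y | E w (α i) y})
          = fun i => {y | E v (M.H w v (α i)) y} := by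
        funext i; exact hQH w v hrel (α i) (hα i)
      have := h hrelQ
      rw [hQHeq, ← ih1 v hv _ hHmem, ← ih2 v hv _ hHmem] at this
      exact this
  | all φ ih =>
    intro w hw α hα
    show (∀ v, M.rel w v → _) ↔ (∀ v, Q.rel w v → _)
    apply forall_congr'
    intro v
    constructor
    · intro h hrel b hb
      have hrel' : M.rel w v := (hQrel w v).mp hrel
      have hv : v ∈ M.worlds := (M.rel_mem hrel').2
      have hHmem : ∀ i, M.H w v (α i) ∈ M.dom v := fun i => M.H_mem hrel' (hα i)
      rw [hQdom v hv] at hb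
      obtain ⟨b₀, hb₀, rfl⟩ := hb
      have hQHeq : (fun i => Q.H w v {y | E w (α i) y})
          = fun i => {y | E v (M.H w v (α i)) y} := by
        funext i; exact hQH w v hrel' (α i) (hα i)
      rw [hQHeq, snoc_class]
      rw [← ih v hv _ (snoc_mem hHmem hb₀)]
      exact h hrel' b₀ hb₀
    · intro h hrel b₀ hb₀
      have hrelQ : Q.rel w v := (hQrel w v).mpr hrel
      have hv : v ∈ M.worlds := (M.rel_mem hrel).2
      have hHmem : ∀ i, M.H w v (α i) ∈ M.dom v := fun i => M.H_mem hrel (hα i)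
      have hbQ : {y | E v b₀ y} ∈ Q.dom v := by
        rw [hQdom v hv]; exact ⟨b₀, hb₀, rfl⟩
      have := h hrelQ _ hbQ
      have hQHeq : (fun i => Q.H w v {y | E w (α i) y})
          = fun i => {y | E v (M.H w v (α i)) y} := by
        funext i; exact hQH w v hrel (α i) (hα i)
      rw [hQHeq, snoc_class, ← ih v hv _ (snoc_mem hHmem hb₀)] at this
      exact this
  | ex φ ih =>
    intro w hw α hα
    constructor
    · rintro ⟨b₀, hb₀, hsat⟩
      refine ⟨{y | E w b₀ y}, ?_, ?_⟩
      · rw [hQdom w hw]; exact ⟨b₀, hb₀, rfl⟩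
      · rw [snoc_class]
        exact (ih w hw _ (snoc_mem hα hb₀)).mp hsat
    · rintro ⟨b, hb, hsat⟩
      rw [hQdom w hw] at hb
      obtain ⟨b₀, hb₀, rfl⟩ := hb
      rw [snoc_class, ← ih w hw _ (snoc_mem hα hb₀)] at hsat
      exact ⟨b₀, hb₀, hsat⟩

lemma asim_MQ (M : KModel S W D) (E : W → D → D → Prop) (hE : IsCong M E)
    (Q : KModel S W (Set D)) (hQ : IsQuotient M E Q) :
    AsimDir M Q
      (fun k u α s β => s = u ∧ u ∈ M.worlds ∧ (∀ i, α i ∈ M.dom u) ∧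
        (∀ i, β i = {y | E u (α i) y}))
      (fun k s β u α => s = u ∧ u ∈ M.worlds ∧ (∀ i, α i ∈ M.dom u) ∧
        (∀ i, β i = {y | E u (α i) y})) := by
  intro k w α s β hF hαd hβd
  obtain ⟨rfl, hw, hα, hβ⟩ := hF
  have hβf : β = fun i => {y | E s (α i) y} := funext hβ
  refine ⟨?_, ?_, ?_, ?_⟩
  · intro P ts hsat
    rw [hβf]
    exact (sat_quot M E hE Q hQ (.atom P ts) s hw α hα).mp hsat
  · intro t hrel
    have hrel' : M.rel s t := (hQ.2.1 s t).mp hrel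
    have ht : t ∈ M.worlds := (M.rel_mem hrel').2
    have hcl : ∀ i, Q.H s t (β i) = {y | E t (M.H s t (α i)) y} := by
      intro i; rw [hβ i]; exact hQ.2.2.2.2.2 s t hrel' (α i) (hα i)
    exact ⟨t, hrel', ⟨rfl, ht, fun i => M.H_mem hrel' (hα i), hcl⟩,
      ⟨rfl, ht, fun i => M.H_mem hrel' (hα i), hcl⟩⟩
  · intro α' hα'
    refine ⟨{y | E s α' y}, ?_, rfl, hw, snoc_mem hα hα', ?_⟩
    · rw [hQ.2.2.1 s hw]; exact ⟨α', hα', rfl⟩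
    · intro i; rw [hβf, snoc_class]
  · intro t hrel β' hβ'
    have hrel' : M.rel s t := (hQ.2.1 s t).mp hrel
    have ht : t ∈ M.worlds := (M.rel_mem hrel').2
    rw [hQ.2.2.1 t ht] at hβ'
    obtain ⟨b₀, hb₀, rfl⟩ := hβ'
    refine ⟨t, hrel', b₀, hb₀, rfl, ht,
      snoc_mem (fun i => M.H_mem hrel' (hα i)) hb₀, ?_⟩
    intro i
    have : (fun i => Q.H s t (β i)) = fun i => {y | E t (M.H s t (α i)) y} := by
      funext i; rw [hβ i]; exact hQ.2.2.2.2.2 s t hrel' (α i) (hα i)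
    rw [this, snoc_class]

lemma asim_QM (M : KModel S W D) (E : W → D → D → Prop) (hE : IsCong M E)
    (Q : KModel S W (Set D)) (hQ : IsQuotient M E Q) :
    AsimDir Q M
      (fun k s β u α => s = u ∧ u ∈ M.worlds ∧ (∀ i, α i ∈ M.dom u) ∧
        (∀ i, β i = {y | E u (α i) y}))
      (fun k u α s β => s = u ∧ u ∈ M.worlds ∧ (∀ i, α i ∈ M.dom u) ∧
        (∀ i, β i = {y | E u (α i) y})) := by
  intro k s β u α hF hβd hαd
  obtain ⟨rfl, hw, hα, hβ⟩ := hF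
  have hβf : β = fun i => {y | E s (α i) y} := funext hβ
  refine ⟨?_, ?_, ?_, ?_⟩
  · intro P ts hsat
    rw [hβf] at hsat
    exact (sat_quot M E hE Q hQ (.atom P ts) s hw α hα).mpr hsat
  · intro t hrel
    have hrelQ : Q.rel s t := (hQ.2.1 s t).mpr hrel
    have ht : t ∈ M.worlds := (M.rel_mem hrel).2
    have hcl : ∀ i, Q.H s t (β i) = {y | E t (M.H s t (α i)) y} := by
      intro i; rw [hβ i]; exact hQ.2.2.2.2.2 s t hrel (α i) (hα i)
    exact ⟨t, hrelQ, ⟨rfl, ht, fun i => M.H_mem hrel (hα i), hcl⟩,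
      ⟨rfl, ht, fun i => M.H_mem hrel (hα i), hcl⟩⟩
  · intro β' hβ'
    rw [hQ.2.2.1 s hw] at hβ'
    obtain ⟨b₀, hb₀, rfl⟩ := hβ'
    refine ⟨b₀, hb₀, rfl, hw, snoc_mem hα hb₀, ?_⟩
    intro i; rw [hβf, snoc_class]
  · intro t hrel α' hα'
    have hrelQ : Q.rel s t := (hQ.2.1 s t).mpr hrel
    have ht : t ∈ M.worlds := (M.rel_mem hrel).2
    refine ⟨t, hrelQ, {y | E t α' y}, ?_, rfl, ht,
      snoc_mem (fun i => M.H_mem hrel (hα i)) hα', ?_⟩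
    · rw [hQ.2.2.1 t ht]; exact ⟨α', hα', rfl⟩
    · intro i
      have : (fun i => Q.H s t (β i)) = fun i => {y | E t (M.H s t (α i)) y} := by
        funext i; rw [hβ i]; exact hQ.2.2.2.2.2 s t hrel (α i) (hα i)
      rw [this, snoc_class]

end QuotAux

/-- The canonical relation between a model and its quotient by a congruence is an
IL-asimulation in both directions; consequently the complete IL-types coincide. -/
theorem quotient_asim {S : Sig} {W D : Type*} (M : KModel S W D) (E : W → D → D → Prop)
    (hE : IsCong M E) (Q : KModel S W (Set D)) (hQ : IsQuotient M E Q)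
    (v : W) (hv : v ∈ M.worlds) {n : ℕ} (a : Fin n → D) (ha : ∀ i, a i ∈ M.dom v) :
    AsimFrom M v a Q v (fun i => {y | E v (a i) y})
      (fun k u α s β => s = u ∧ u ∈ M.worlds ∧ (∀ i, α i ∈ M.dom u) ∧
        (∀ i, β i = {y | E u (α i) y}))
      (fun k s β u α => s = u ∧ u ∈ M.worlds ∧ (∀ i, α i ∈ M.dom u) ∧
        (∀ i, β i = {y | E u (α i) y})) ∧
    AsimFrom Q v (fun i => {y | E v (a i) y}) M v a
      (fun k s β u α => s = u ∧ u ∈ M.worlds ∧ (∀ i, α i ∈ M.dom u) ∧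
        (∀ i, β i = {y | E u (α i) y}))
      (fun k u α s β => s = u ∧ u ∈ M.worlds ∧ (∀ i, α i ∈ M.dom u) ∧
        (∀ i, β i = {y | E u (α i) y})) ∧
    Tp M v a = Tp Q v (fun i => {y | E v (a i) y}) := by
  have h1 := asim_MQ M E hE Q hQ
  have h2 := asim_QM M E hE Q hQ
  have hF : v = v ∧ v ∈ M.worlds ∧ (∀ i, a i ∈ M.dom v) ∧
      (∀ i, ({y | E v (a i) y} : Set D) = {y | E v (a i) y}) :=
    ⟨rfl, hv, ha, fun i => rfl⟩
  refine ⟨⟨⟨h1, h2⟩, hF⟩, ⟨⟨h2, h1⟩, hF⟩, ?_⟩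
  unfold Tp
  have key : ∀ φ : Fml S n, Sat M v φ a ↔ Sat Q v φ (fun i => {y | E v (a i) y}) :=
    fun φ => sat_quot M E hE Q hQ φ v hv a ha
  refine Prod.ext ?_ ?_
  · ext φ; exact key φ
  · ext φ; exact not_congr (key φ)
end

section
/- The Tarski Union Property for intuitionistic first-order logic: if M₁ ⪯ M₂ ⪯ ... ⪯ M_n ⪯ ... is a countable chain of Kripke Θ-models where each M_i is an IL-elementary submodel of M_{i+1}, then each M_i is an IL-elementary submodel of the union M = ⋃_{n} M_n. That is, for all i, all worlds w of M_i, all tuples ā_m in A_w, and fresh constants c̄_m, the complete IL-types agree: Tp(M_i, w, c̄_m/ā_m) = Tp(M, w, c̄_m/ā_m). -/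
set_option linter.unusedVariables false

universe u

variable {S T : Sig} {W D : Type*}

section TarskiAux

variable {S : Sig} {W D : Type*}

lemma tp_sat_iff {M N : KModel S W D} {w : W} {n : ℕ} {a : Fin n → D}
    (h : Tp M w a = Tp N w a) (φ : Fml S n) : Sat M w φ a ↔ Sat N w φ a :=
  Set.ext_iff.mp (congrArg Prod.fst h) φ

lemma tp_of_sat_iff {M N : KModel S W D} {w : W} {n : ℕ} {a : Fin n → D}
    (h : ∀ φ : Fml S n, Sat M w φ a ↔ Sat N w φ a) : Tp M w a = Tp N w a := by
  unfold Tp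
  have h1 : {φ : Fml S n | Sat M w φ a} = {φ | Sat N w φ a} := Set.ext fun φ => h φ
  have h2 : {φ : Fml S n | ¬ Sat M w φ a} = {φ | ¬ Sat N w φ a} :=
    Set.ext fun φ => not_congr (h φ)
  rw [h1, h2]

lemma Submodel.trans' {M N P : KModel S W D} (h1 : Submodel M N) (h2 : Submodel N P) :
    Submodel M P := by
  obtain ⟨w1, r1, d1, p1, c1, hh1⟩ := h1
  obtain ⟨w2, r2, d2, p2, c2, hh2⟩ := h2
  refine ⟨w1.trans w2, ?_, ?_, ?_, ?_, ?_⟩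
  · intro a b
    constructor
    · intro h
      have hm := (r1 a b).mp h
      exact ⟨((r2 a b).mp hm.1).1, hm.2⟩
    · rintro ⟨hP, ha, hb⟩
      refine (r1 a b).mpr ⟨(r2 a b).mpr ⟨hP, w1 ha, w1 hb⟩, ha, hb⟩
  · intro w hw; exact (d1 w hw).trans (d2 w (w1 hw))
  · intro w hw P t ht
    exact (p1 w hw P t ht).trans (p2 w (w1 hw) P t (fun i => d1 w hw (ht i)))
  · intro w hw c; exact (c1 w hw c).trans (c2 w (w1 hw) c)
  · intro a b hr x hx
    have hrN : N.rel a b := ((r1 a b).mp hr).1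
    have haM : a ∈ M.worlds := ((r1 a b).mp hr).2.1
    exact (hh1 a b hr x hx).trans (hh2 a b hrN x (d1 a haM hx))

lemma ElemSub.trans' {M N P : KModel S W D} (h1 : ElemSub M N) (h2 : ElemSub N P) :
    ElemSub M P := by
  refine ⟨h1.1.trans' h2.1, ?_⟩
  intro w hw n a ha
  have hwN : w ∈ N.worlds := h1.1.1 hw
  have haN : ∀ i, a i ∈ N.dom w := fun i => h1.1.2.2.1 w hw (ha i)
  exact (h1.2 w hw n a ha).trans (h2.2 w hwN n a haN)

lemma ElemSub.refl' (M : KModel S W D) : ElemSub M M := by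
  refine ⟨⟨le_refl _, ?_, fun w _ => le_refl _, fun _ _ _ _ _ => Iff.rfl,
    fun _ _ _ => rfl, fun _ _ _ _ _ => rfl⟩, fun _ _ _ _ _ => rfl⟩
  intro a b
  exact ⟨fun h => ⟨h, (M.rel_mem h).1, (M.rel_mem h).2⟩, fun h => h.1⟩

lemma chain_elem {Ms : ℕ → KModel S W D} (hchain : ∀ k, ElemSub (Ms k) (Ms (k + 1))) :
    ∀ k j, k ≤ j → ElemSub (Ms k) (Ms j) := by
  intro k j hkj
  induction j, hkj using Nat.le_induction with
  | base => exact ElemSub.refl' _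
  | succ j hkj ih => exact ih.trans' (hchain j)

end TarskiAux

/-- The Tarski Union Property: each member of a countable IL-elementary chain is an
IL-elementary submodel of the union of the chain. -/
theorem tarski_union {S : Sig} {W D : Type*} (Ms : ℕ → KModel S W D)
    (hchain : ∀ k, ElemSub (Ms k) (Ms (k + 1)))
    (U : KModel S W D) (hU : IsChainUnion Ms U) :
    ∀ k, ElemSub (Ms k) U := by
  obtain ⟨hW, hR, hD, hP, hC, hH⟩ := hU
  have hsub := chain_elem hchain
  have worlds_mono : ∀ {k j}, k ≤ j → (Ms k).worlds ⊆ (Ms j).worlds :=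
    fun h => (hsub _ _ h).1.1
  have dom_mono : ∀ {k j}, k ≤ j → ∀ w ∈ (Ms k).worlds, (Ms k).dom w ⊆ (Ms j).dom w :=
    fun h => (hsub _ _ h).1.2.2.1
  have rel_mono : ∀ {k j}, k ≤ j → ∀ {a b}, (Ms k).rel a b → (Ms j).rel a b :=
    by intro k j h a b hr; exact (((hsub _ _ h).1.2.1 a b).mp hr).1
  have sat_agree : ∀ {k j}, k ≤ j → ∀ w ∈ (Ms k).worlds, ∀ {n} (a : Fin n → D),
      (∀ i, a i ∈ (Ms k).dom w) → ∀ φ, Sat (Ms k) w φ a ↔ Sat (Ms j) w φ a :=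
    by intro k j h w hw n a ha φ; exact tp_sat_iff ((hsub _ _ h).2 w hw _ a ha) φ
  have wU : ∀ {k w}, w ∈ (Ms k).worlds → w ∈ U.worlds := by
    intro k w h; rw [hW]; exact Set.mem_iUnion.mpr ⟨k, h⟩
  have dU : ∀ {k w x}, w ∈ (Ms k).worlds → x ∈ (Ms k).dom w → x ∈ U.dom w := by
    intro k w x hw hx; rw [hD w (wU hw)]; exact ⟨k, hw, hx⟩
  have key : ∀ (n : ℕ) (φ : Fml S n) (k : ℕ) (w : W) (a : Fin n → D),
      w ∈ (Ms k).worlds → (∀ i, a i ∈ (Ms k).dom w) →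
      (Sat (Ms k) w φ a ↔ Sat U w φ a) := by
    intro n φ
    induction φ with
    | @atom n P ts =>
      intro k w a hw ha
      have hdom : ∀ i, Term.eval (Ms k) w a (ts i) ∈ (Ms k).dom w := by
        intro i
        rcases ts i with j | c
        · exact ha j
        · exact (Ms k).interpC_mem hw c
      have heval : (fun i => Term.eval U w a (ts i)) =
          fun i => Term.eval (Ms k) w a (ts i) := by
        funext i
        rcases ts i with j | c
        · rfl
        · exact hC w k hw c
      simp only [Sat]
      rw [heval, hP w (wU hw) P _ (fun i => dU hw (hdom i))]
      constructor
      · intro h; exact ⟨k, hw, hdom, h⟩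
      · rintro ⟨j, hwj, hdj, hj⟩
        have h1 : (fun i => Term.eval (Ms k) w a (ts i)) ∈ (Ms (max k j)).interpP w P :=
          ((hsub j (max k j) (le_max_right _ _)).1.2.2.2.1 w hwj P _ hdj).mp hj
        exact ((hsub k (max k j) (le_max_left _ _)).1.2.2.2.1 w hw P _ hdom).mpr h1
    | bot => intro k w a hw ha; simp [Sat]
    | and φ ψ ihφ ihψ =>
      intro k w a hw ha
      simp only [Sat]
      rw [ihφ k w a hw ha, ihψ k w a hw ha]
    | or φ ψ ihφ ihψ =>
      intro k w a hw ha
      simp only [Sat]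
      rw [ihφ k w a hw ha, ihψ k w a hw ha]
    | imp φ ψ ihφ ihψ =>
      intro k w a hw ha
      simp only [Sat]
      constructor
      · intro h v hv
        obtain ⟨j0, hj0⟩ := (hR w v).mp hv
        have hrj : (Ms (max k j0)).rel w v := rel_mono (le_max_right _ _) hj0
        have hvj : v ∈ (Ms (max k j0)).worlds := ((Ms (max k j0)).rel_mem hrj).2
        have haj : ∀ i, a i ∈ (Ms (max k j0)).dom w :=
          fun i => dom_mono (le_max_left _ _) w hw (ha i)
        have hHe : (fun i => U.H w v (a i)) = fun i => (Ms (max k j0)).H w v (a i) :=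
          funext fun i => hH w v (max k j0) hrj (a i) (haj i)
        have hb : ∀ i, (Ms (max k j0)).H w v (a i) ∈ (Ms (max k j0)).dom v :=
          fun i => (Ms (max k j0)).H_mem hrj (haj i)
        have hsat : Sat (Ms (max k j0)) w (.imp φ ψ) a :=
          (sat_agree (le_max_left _ _) w hw a ha _).mp h
        simp only [Sat] at hsat
        rw [hHe]
        intro hφ
        exact (ihψ (max k j0) v _ hvj hb).mp
          (hsat v hrj ((ihφ (max k j0) v _ hvj hb).mpr hφ))
      · intro h v hv hφ
        have hvU : U.rel w v := (hR w v).mpr ⟨k, hv⟩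
        have hvk : v ∈ (Ms k).worlds := ((Ms k).rel_mem hv).2
        have hb : ∀ i, (Ms k).H w v (a i) ∈ (Ms k).dom v :=
          fun i => (Ms k).H_mem hv (ha i)
        have hHe : (fun i => U.H w v (a i)) = fun i => (Ms k).H w v (a i) :=
          funext fun i => hH w v k hv (a i) (ha i)
        have hres := h v hvU (by rw [hHe]; exact (ihφ k v _ hvk hb).mp hφ)
        rw [hHe] at hres
        exact (ihψ k v _ hvk hb).mpr hres
    | all φ ih =>
      intro k w a hw ha
      simp only [Sat]
      constructor
      · intro h v hv b hb
        obtain ⟨j0, hj0⟩ := (hR w v).mp hv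
        have hvU : v ∈ U.worlds := wU ((Ms j0).rel_mem hj0).2
        rw [hD v hvU] at hb
        obtain ⟨j1, hvj1, hbj1⟩ := hb
        set j := max k (max j0 j1) with hj
        have hrj : (Ms j).rel w v :=
          rel_mono (le_trans (le_max_left _ _) (le_max_right _ _)) hj0
        have hvj : v ∈ (Ms j).worlds := ((Ms j).rel_mem hrj).2
        have haj : ∀ i, a i ∈ (Ms j).dom w :=
          fun i => dom_mono (le_max_left _ _) w hw (ha i)
        have hbj : b ∈ (Ms j).dom v :=
          dom_mono (le_trans (le_max_right _ _) (le_max_right _ _)) v hvj1 hbj1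
        have hsat : Sat (Ms j) w (.all φ) a := (sat_agree (le_max_left _ _) w hw a ha _).mp h
        simp only [Sat] at hsat
        have hres := hsat v hrj b hbj
        have hHe : (fun i => U.H w v (a i)) = fun i => (Ms j).H w v (a i) :=
          funext fun i => hH w v j hrj (a i) (haj i)
        rw [hHe]
        have hdomsnoc : ∀ i, (Fin.snoc (fun i => (Ms j).H w v (a i)) b : Fin _ → D) i ∈
            (Ms j).dom v := by
          intro i
          refine Fin.lastCases ?_ ?_ i
          · simpa using hbj
          · intro i; simpa using (Ms j).H_mem hrj (haj i)
        exact (ih j v _ hvj hdomsnoc).mp hres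
      · intro h v hv b hb
        have hvU : U.rel w v := (hR w v).mpr ⟨k, hv⟩
        have hvk : v ∈ (Ms k).worlds := ((Ms k).rel_mem hv).2
        have hbU : b ∈ U.dom v := dU hvk hb
        have hres := h v hvU b hbU
        have hHe : (fun i => U.H w v (a i)) = fun i => (Ms k).H w v (a i) :=
          funext fun i => hH w v k hv (a i) (ha i)
        rw [hHe] at hres
        have hdomsnoc : ∀ i, (Fin.snoc (fun i => (Ms k).H w v (a i)) b : Fin _ → D) i ∈
            (Ms k).dom v := by
          intro i
          refine Fin.lastCases ?_ ?_ i
          · simpa using hb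
          · intro i; simpa using (Ms k).H_mem hv (ha i)
        exact (ih k v _ hvk hdomsnoc).mpr hres
    | ex φ ih =>
      intro k w a hw ha
      simp only [Sat]
      constructor
      · rintro ⟨b, hb, hsat⟩
        refine ⟨b, dU hw hb, ?_⟩
        have hdomsnoc : ∀ i, (Fin.snoc a b : Fin _ → D) i ∈ (Ms k).dom w := by
          intro i
          refine Fin.lastCases ?_ ?_ i
          · simpa using hb
          · intro i; simpa using ha i
        exact (ih k w _ hw hdomsnoc).mp hsat
      · rintro ⟨b, hbU, hsat⟩
        rw [hD w (wU hw)] at hbU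
        obtain ⟨j0, hwj0, hbj0⟩ := hbU
        set j := max k j0 with hj
        have hwj : w ∈ (Ms j).worlds := worlds_mono (le_max_left _ _) hw
        have hbj : b ∈ (Ms j).dom w := dom_mono (le_max_right _ _) w hwj0 hbj0
        have hdomsnoc : ∀ i, (Fin.snoc a b : Fin _ → D) i ∈ (Ms j).dom w := by
          intro i
          refine Fin.lastCases ?_ ?_ i
          · simpa using hbj
          · intro i; simpa using dom_mono (le_max_left _ _) w hw (ha i)
        have hsatj : Sat (Ms j) w φ (Fin.snoc a b) := (ih j w _ hwj hdomsnoc).mpr hsat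
        have hex : Sat (Ms j) w (.ex φ) a := ⟨b, hbj, hsatj⟩
        exact (sat_agree (le_max_left _ _) w hw a ha _).mpr hex
  intro k
  refine ⟨⟨fun w hw => wU hw, ?_, fun w hw x hx => dU hw hx, ?_, ?_, ?_⟩, ?_⟩
  · intro a b
    constructor
    · intro h
      exact ⟨(hR a b).mpr ⟨k, h⟩, ((Ms k).rel_mem h).1, ((Ms k).rel_mem h).2⟩
    · rintro ⟨hUr, ha, hb⟩
      obtain ⟨j, hj⟩ := (hR a b).mp hUr
      have hm : (Ms (max k j)).rel a b := rel_mono (le_max_right _ _) hj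
      exact ((hsub k (max k j) (le_max_left _ _)).1.2.1 a b).mpr ⟨hm, ha, hb⟩
  · intro w hw P t ht
    rw [hP w (wU hw) P t (fun i => dU hw (ht i))]
    constructor
    · intro h; exact ⟨k, hw, ht, h⟩
    · rintro ⟨j, hwj, hdj, hj⟩
      have h1 : t ∈ (Ms (max k j)).interpP w P :=
        ((hsub j (max k j) (le_max_right _ _)).1.2.2.2.1 w hwj P t hdj).mp hj
      exact ((hsub k (max k j) (le_max_left _ _)).1.2.2.2.1 w hw P t ht).mpr h1
  · intro w hw c; exact (hC w k hw c).symm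
  · intro a b hr x hx; exact (hH a b k hr x hx).symm
  · intro w hw n a ha
    exact tp_of_sat_iff (fun φ => key n φ k w a hw ha)
end
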